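/- Let α ∈ (0,1) and let c₀ = (2(1−α)/3)^{1/(1−α)} and c₁ = (2(1−α))^{1/(1−α)}. Then for every k ≥ 1, P(τ_k ≤ c₀ k^{1/(1−α)}) ≤ 2 e^{−k/18} and P(τ_k ≥ c₁ k^{1/(1−α)}) ≤ 2 e^{−k/6}. (In particular c₁ > c₀ > 0 depend on α only.) -/

import Mathlib

open MeasureTheory ProbabilityTheory Real Filter
open scoped NNReal ENNReal

section AuxExp

open Set

lemma expMeasure_one_eq' : expMeasure 1 = (volume : Measure ℝ).withDensity
    (fun x => ((Real.toNNReal (exponentialPDFReal 1 x) : ℝ≥0) : ℝ≥0∞)) := rfl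

lemma exponentialPDFReal_one' (x : ℝ) :
    exponentialPDFReal 1 x = if 0 ≤ x then Real.exp (-x) else 0 := by
  rw [exponentialPDFReal, gammaPDFReal]
  split_ifs with h
  · simp [Real.Gamma_one, Real.rpow_zero]
  · rfl

lemma integral_exp_mul_expMeasure' {t : ℝ} (ht : t < 1) :
    Integrable (fun x => Real.exp (t * x)) (expMeasure 1) ∧
      ∫ x, Real.exp (t * x) ∂(expMeasure 1) = (1 - t)⁻¹ := by
  have hmeas : Measurable fun x : ℝ => Real.toNNReal (exponentialPDFReal 1 x) :=
    (measurable_exponentialPDFReal 1).real_toNNReal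
  have h1t : (0:ℝ) < 1 - t := by linarith
  have hfun : (fun x : ℝ => (Real.toNNReal (exponentialPDFReal 1 x) : ℝ) * Real.exp (t * x))
      = Set.indicator (Ici 0) (fun x => Real.exp (-(1 - t) * x)) := by
    funext x
    rw [Real.coe_toNNReal _ (exponentialPDFReal_nonneg one_pos x), exponentialPDFReal_one']
    by_cases h : (0:ℝ) ≤ x
    · rw [if_pos h, Set.indicator_of_mem (Set.mem_Ici.mpr h), ← Real.exp_add]
      ring_nf
    · rw [if_neg h, Set.indicator_of_notMem (by simpa using h), zero_mul]
  have hIntOn : IntegrableOn (fun x : ℝ => Real.exp (-(1 - t) * x)) (Ici 0) := by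
    rw [integrableOn_Ici_iff_integrableOn_Ioi]
    exact exp_neg_integrableOn_Ioi 0 h1t
  have hInd : Integrable (Set.indicator (Ici 0) (fun x => Real.exp (-(1 - t) * x))) := by
    rwa [integrable_indicator_iff measurableSet_Ici]
  constructor
  · rw [expMeasure_one_eq', integrable_withDensity_iff_integrable_smul hmeas]
    simp only [NNReal.smul_def, smul_eq_mul]
    rw [hfun]
    exact hInd
  · rw [expMeasure_one_eq', integral_withDensity_eq_integral_smul hmeas]
    simp only [NNReal.smul_def, smul_eq_mul]
    rw [hfun, integral_indicator measurableSet_Ici, integral_Ici_eq_integral_Ioi]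
    have := Real.integral_rpow_mul_exp_neg_mul_Ioi (a := 1) (r := 1 - t) one_pos h1t
    simp only [sub_self, Real.rpow_zero, one_mul, Real.rpow_one, Real.Gamma_one, mul_one] at this
    rw [show (fun x : ℝ => Real.exp (-(1 - t) * x)) = fun x : ℝ => Real.exp (-((1 - t) * x)) by
      funext x; ring_nf]
    rw [this, one_div]

lemma mgf_exp_rv' {Ω : Type*} [MeasurableSpace Ω] (μ : Measure Ω) (X : Ω → ℝ)
    (hX : Measurable X) (hd : Measure.map X μ = expMeasure 1) {t : ℝ} (ht : t < 1) :
    Integrable (fun ω => Real.exp (t * X ω)) μ ∧ mgf X μ t = (1 - t)⁻¹ := by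
  obtain ⟨hint, hval⟩ := integral_exp_mul_expMeasure' ht
  have hg : AEStronglyMeasurable (fun x : ℝ => Real.exp (t * x)) (Measure.map X μ) :=
    (Real.continuous_exp.comp (continuous_const.mul continuous_id)).aestronglyMeasurable
  constructor
  · exact (integrable_map_measure hg hX.aemeasurable).mp (by rwa [hd])
  · rw [mgf, ← integral_map hX.aemeasurable hg, hd, hval]

lemma two_le_exp_56' : (2:ℝ) ≤ Real.exp (5/6) := by
  have h1 : Real.exp (5/6 : ℝ) = Real.exp (5/12) * Real.exp (5/12) := by
    rw [← Real.exp_add]; norm_num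
  have h2 := Real.add_one_le_exp (5/12 : ℝ)
  nlinarith [Real.exp_pos (5/12 : ℝ)]

lemma exp_718_le' : Real.exp (7/18) ≤ 3/2 := by
  have h1 : Real.exp (7/18 : ℝ) = Real.exp (7/108) ^ (6:ℕ) := by
    rw [← Real.exp_nat_mul]; norm_num
  have h2 : Real.exp (7/108 : ℝ) ≤ 108/101 := by
    have h := Real.add_one_le_exp (-(7/108) : ℝ)
    rw [Real.exp_neg] at h
    have h3 : (101:ℝ)/108 ≤ (Real.exp (7/108))⁻¹ := by linarith
    have h4 := mul_le_mul_of_nonneg_left h3 (Real.exp_pos (7/108:ℝ)).le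
    rw [mul_inv_cancel₀ (Real.exp_pos (7/108:ℝ)).ne'] at h4
    nlinarith [Real.exp_pos (7/108:ℝ)]
  calc Real.exp (7/18:ℝ) = Real.exp (7/108) ^ (6:ℕ) := h1
    _ ≤ ((108:ℝ)/101) ^ (6:ℕ) := pow_le_pow_left₀ (Real.exp_pos _).le h2 6
    _ ≤ 3/2 := by norm_num

end AuxExp

/-- The points `τ_k = ((1-α) S_k)^{1/(1-α)}` of the Poisson process with rate `t^{-α}`,
where `S_k = E_0 + ⋯ + E_{k-1}` is a sum of i.i.d. rate-1 exponentials. -/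
noncomputable def tauPoly (α : ℝ) {Ω : Type*} (E : ℕ → Ω → ℝ) (k : ℕ) (ω : Ω) : ℝ :=
  ((1 - α) * ∑ i ∈ Finset.range k, E i ω) ^ (1 / (1 - α))

theorem stmt0 {Ω : Type*} [MeasurableSpace Ω] (μ : Measure Ω) [IsProbabilityMeasure μ]
    (α : ℝ) (hα : α ∈ Set.Ioo (0:ℝ) 1)
    (E : ℕ → Ω → ℝ) (hEmeas : ∀ k, Measurable (E k))
    (hEindep : iIndepFun E μ)
    (hEdist : ∀ k, Measure.map (E k) μ = expMeasure 1)
    (c₀ c₁ : ℝ)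
    (hc₀ : c₀ = (2 * (1 - α) / 3) ^ (1 / (1 - α)))
    (hc₁ : c₁ = (2 * (1 - α)) ^ (1 / (1 - α))) :
    0 < c₀ ∧ c₀ < c₁ ∧
      ∀ k : ℕ, 1 ≤ k →
        μ {ω | tauPoly α E k ω ≤ c₀ * (k : ℝ) ^ (1 / (1 - α))}
            ≤ ENNReal.ofReal (2 * Real.exp (-(k : ℝ) / 18)) ∧
        μ {ω | c₁ * (k : ℝ) ^ (1 / (1 - α)) ≤ tauPoly α E k ω}
            ≤ ENNReal.ofReal (2 * Real.exp (-(k : ℝ) / 6)) := by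
  obtain ⟨hα0, hα1⟩ := hα
  have h1α : (0:ℝ) < 1 - α := by linarith
  have hp : (0:ℝ) < 1 / (1 - α) := by positivity
  have hc₀pos : 0 < c₀ := by
    rw [hc₀]; exact Real.rpow_pos_of_pos (by linarith) _
  have hc01 : c₀ < c₁ := by
    rw [hc₀, hc₁]
    exact Real.rpow_lt_rpow (by positivity) (by linarith) hp
  refine ⟨hc₀pos, hc01, fun k hk => ?_⟩
  have hkR : (1:ℝ) ≤ (k:ℝ) := by exact_mod_cast hk
  have hhalf := fun i => mgf_exp_rv' μ (E i) (hEmeas i) (hEdist i) (t := 1/2) (by norm_num)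
  have hneg := fun i => mgf_exp_rv' μ (E i) (hEmeas i) (hEdist i) (t := -(1/2)) (by norm_num)
  set S : Ω → ℝ := ∑ i ∈ Finset.range k, E i with hS
  have hSω : ∀ ω, S ω = ∑ i ∈ Finset.range k, E i ω := by
    intro ω; rw [hS]; exact Finset.sum_apply ω (Finset.range k) E
  have hint_half : Integrable (fun ω => Real.exp ((1/2) * S ω)) μ :=
    hEindep.integrable_exp_mul_sum hEmeas (fun i _ => (hhalf i).1)
  have hint_neg : Integrable (fun ω => Real.exp (-(1/2) * S ω)) μ :=
    hEindep.integrable_exp_mul_sum hEmeas (fun i _ => (hneg i).1)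
  have hmgf_half : mgf S μ (1/2) = 2 ^ k := by
    rw [hS, hEindep.mgf_sum hEmeas]
    rw [Finset.prod_congr rfl (fun i _ => (hhalf i).2), Finset.prod_const, Finset.card_range]
    norm_num
  have hmgf_neg : mgf S μ (-(1/2)) = ((2:ℝ)/3) ^ k := by
    rw [hS, hEindep.mgf_sum hEmeas]
    rw [Finset.prod_congr rfl (fun i _ => (hneg i).2), Finset.prod_const, Finset.card_range]
    norm_num
  have hcher_up := measure_ge_le_exp_mul_mgf (μ := μ) (X := S) (2 * (k:ℝ))
    (by norm_num : (0:ℝ) ≤ 1/2) hint_half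
  have hcher_lo := measure_le_le_exp_mul_mgf (μ := μ) (X := S) (2 * (k:ℝ) / 3)
    (by norm_num : -(1/2:ℝ) ≤ 0) hint_neg
  -- numeric bound, upper tail
  have h2e : (2:ℝ) * Real.exp (-(5/6)) ≤ 1 := by
    rw [Real.exp_neg]
    have h4 := mul_le_mul_of_nonneg_right two_le_exp_56'
      (inv_nonneg.mpr (Real.exp_pos (5/6:ℝ)).le)
    rw [mul_inv_cancel₀ (Real.exp_pos (5/6:ℝ)).ne'] at h4
    linarith
  have hb_up : Real.exp (-(1/2) * (2 * (k:ℝ))) * mgf S μ (1/2)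
      ≤ 2 * Real.exp (-(k:ℝ) / 6) := by
    rw [hmgf_half]
    have key : Real.exp (-(1/2) * (2 * (k:ℝ))) * (2:ℝ) ^ k
        = ((2:ℝ) * Real.exp (-(5/6))) ^ k * Real.exp (-(k:ℝ) / 6) := by
      rw [mul_pow, ← Real.exp_nat_mul, mul_assoc, ← Real.exp_add]
      rw [show (k:ℝ) * -(5/6) + -(k:ℝ)/6 = -(1/2) * (2 * (k:ℝ)) by ring]
      ring
    rw [key]
    have hpow : ((2:ℝ) * Real.exp (-(5/6))) ^ k ≤ 1 := pow_le_one₀ (by positivity) h2e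
    nlinarith [Real.exp_pos (-(k:ℝ)/6), mul_le_mul_of_nonneg_right hpow (Real.exp_pos (-(k:ℝ)/6)).le]
  -- numeric bound, lower tail
  have h3e : (2:ℝ)/3 * Real.exp (7/18) ≤ 1 := by
    have := exp_718_le'
    nlinarith
  have hb_lo : Real.exp (-(-(1/2)) * (2 * (k:ℝ) / 3)) * mgf S μ (-(1/2))
      ≤ 2 * Real.exp (-(k:ℝ) / 18) := by
    rw [hmgf_neg]
    have key : Real.exp (-(-(1/2)) * (2 * (k:ℝ) / 3)) * ((2:ℝ)/3) ^ k
        = ((2:ℝ)/3 * Real.exp (7/18)) ^ k * Real.exp (-(k:ℝ) / 18) := by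
      rw [mul_pow, ← Real.exp_nat_mul, mul_assoc, ← Real.exp_add]
      rw [show (k:ℝ) * (7/18) + -(k:ℝ)/18 = -(-(1/2)) * (2 * (k:ℝ) / 3) by ring]
      ring
    rw [key]
    have hpow : ((2:ℝ)/3 * Real.exp (7/18)) ^ k ≤ 1 := pow_le_one₀ (by positivity) h3e
    nlinarith [Real.exp_pos (-(k:ℝ)/18),
      mul_le_mul_of_nonneg_right hpow (Real.exp_pos (-(k:ℝ)/18)).le]
  -- measure bounds on S-events
  have hup : μ {ω | 2 * (k:ℝ) ≤ S ω} ≤ ENNReal.ofReal (2 * Real.exp (-(k:ℝ) / 6)) := by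
    rw [ENNReal.le_ofReal_iff_toReal_le (measure_ne_top μ _) (by positivity)]
    exact hcher_up.trans hb_up
  have hlo : μ {ω | S ω ≤ 2 * (k:ℝ) / 3} ≤ ENNReal.ofReal (2 * Real.exp (-(k:ℝ) / 18)) := by
    rw [ENNReal.le_ofReal_iff_toReal_le (measure_ne_top μ _) (by positivity)]
    exact hcher_lo.trans hb_lo
  -- null set of negative values
  have hnull : μ (⋃ i ∈ Finset.range k, {ω | E i ω < 0}) = 0 := by
    refine (measure_biUnion_null_iff (Finset.range k).countable_toSet).mpr ?_
    intro i _
    have hmap : μ {ω | E i ω < 0} = Measure.map (E i) μ (Set.Iio 0) := by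
      rw [Measure.map_apply (hEmeas i) measurableSet_Iio]; rfl
    rw [hmap, hEdist i]
    rw [show expMeasure 1 = (volume : Measure ℝ).withDensity (exponentialPDF 1) from rfl,
      withDensity_apply _ measurableSet_Iio]
    exact lintegral_exponentialPDF_of_nonpos le_rfl
  -- inclusion 1
  have hincl1 : {ω | tauPoly α E k ω ≤ c₀ * (k:ℝ) ^ (1 / (1 - α))}
      ⊆ {ω | S ω ≤ 2 * (k:ℝ) / 3} := by
    intro ω hω
    simp only [Set.mem_setOf_eq] at hω ⊢
    by_contra h
    push_neg at h
    have hSpos : 0 < S ω := lt_trans (by positivity) h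
    have hbase : 2 * (1 - α) / 3 * (k:ℝ) < (1 - α) * S ω := by nlinarith
    have hlt := Real.rpow_lt_rpow (by positivity) hbase hp
    rw [Real.mul_rpow (by positivity) (Nat.cast_nonneg k)] at hlt
    rw [tauPoly, ← hSω ω, hc₀] at hω
    linarith
  -- inclusion 2
  have hincl2 : {ω | c₁ * (k:ℝ) ^ (1 / (1 - α)) ≤ tauPoly α E k ω}
      ⊆ {ω | 2 * (k:ℝ) ≤ S ω} ∪ ⋃ i ∈ Finset.range k, {ω | E i ω < 0} := by
    intro ω hω
    by_cases hneg2 : ∃ i ∈ Finset.range k, E i ω < 0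
    · right
      obtain ⟨i, hi, hlt⟩ := hneg2
      exact Set.mem_biUnion hi hlt
    · left
      push_neg at hneg2
      simp only [Set.mem_setOf_eq] at hω ⊢
      by_contra h
      push_neg at h
      have hS0 : 0 ≤ S ω := by
        rw [hSω ω]; exact Finset.sum_nonneg hneg2
      have hbase : (1 - α) * S ω < 2 * (1 - α) * (k:ℝ) := by nlinarith
      have hlt := Real.rpow_lt_rpow (by positivity) hbase hp
      rw [Real.mul_rpow (by positivity) (Nat.cast_nonneg k)] at hlt
      rw [tauPoly, ← hSω ω, hc₁] at hω
      linarith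
  constructor
  · exact (measure_mono hincl1).trans hlo
  · refine (measure_mono hincl2).trans ?_
    calc μ ({ω | 2 * (k:ℝ) ≤ S ω} ∪ ⋃ i ∈ Finset.range k, {ω | E i ω < 0})
        ≤ μ {ω | 2 * (k:ℝ) ≤ S ω} + μ (⋃ i ∈ Finset.range k, {ω | E i ω < 0}) :=
          measure_union_le _ _
      _ = μ {ω | 2 * (k:ℝ) ≤ S ω} := by rw [hnull, add_zero]
      _ ≤ ENNReal.ofReal (2 * Real.exp (-(k:ℝ) / 6)) := hup
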